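/- arXiv:0810.5206 — 4 statements merged into one kernel-verified Lean document; each statement's English description precedes it below -/
import Mathlib

section
/- A linear combination of n Dirac delta functions with nonzero weights at distinct points in [0,1] is uniquely determined by its moments m_0,...,m_{2n-1}: if Σ_{i=1}^n A_i x_i^k = Σ_{i=1}^n B_i y_i^k for k = 0,...,2n-1, where x_1,...,x_n are distinct, y_1,...,y_n are distinct, and all A_i, B_i are nonzero, then the multisets of (weight, point) pairs coincide. -/
open Polynomial

lemma vanish_aux (S : Finset ℝ) (c : ℝ → ℝ)
    (h : ∀ k < S.card, ∑ s ∈ S, c s * s ^ k = 0) :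
    ∀ t ∈ S, c t = 0 := by
  intro t ht
  have hinj : Set.InjOn (id : ℝ → ℝ) S := Function.injective_id.injOn
  set p := Lagrange.basis S id t with hp
  have hcard : 1 ≤ S.card := Finset.card_pos.mpr ⟨t, ht⟩
  have hnd : p.natDegree < S.card := by
    rw [hp, Lagrange.natDegree_basis hinj ht]
    omega
  have key : ∑ s ∈ S, c s * p.eval s = 0 := by
    calc ∑ s ∈ S, c s * p.eval s
        = ∑ s ∈ S, ∑ k ∈ Finset.range (p.natDegree+1), p.coeff k * (c s * s ^ k) := by
          refine Finset.sum_congr rfl fun s _ => ?_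
          rw [Polynomial.eval_eq_sum_range, Finset.mul_sum]
          exact Finset.sum_congr rfl fun k _ => by ring
      _ = ∑ k ∈ Finset.range (p.natDegree+1), p.coeff k * ∑ s ∈ S, c s * s ^ k := by
          rw [Finset.sum_comm]; simp [Finset.mul_sum]
      _ = 0 := by
          refine Finset.sum_eq_zero fun k hk => ?_
          rw [h k (lt_of_le_of_lt (Nat.lt_succ_iff.mp (Finset.mem_range.mp hk)) hnd),
            mul_zero]
  have heval : ∑ s ∈ S, c s * p.eval s = c t := by
    rw [Finset.sum_eq_single t]
    · have : p.eval (id t) = 1 := Lagrange.eval_basis_self hinj ht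
      simp only [id] at this
      rw [this, mul_one]
    · intro s hs hne
      have : p.eval (id s) = 0 := Lagrange.eval_basis_of_ne (Ne.symm hne) hs
      simp only [id] at this
      rw [this, mul_zero]
    · intro hts; exact absurd ht hts
  rw [heval] at key
  exact key

theorem delta_combination_unique (n : ℕ) (A B : Fin n → ℝ) (x y : Fin n → ℝ)
    (hx : ∀ i, x i ∈ Set.Icc (0:ℝ) 1) (hy : ∀ i, y i ∈ Set.Icc (0:ℝ) 1)
    (hxd : Function.Injective x) (hyd : Function.Injective y)
    (hA : ∀ i, A i ≠ 0) (hB : ∀ i, B i ≠ 0)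
    (h : ∀ k < 2 * n, ∑ i, A i * (x i) ^ k = ∑ i, B i * (y i) ^ k) :
    (Finset.univ.val.map fun i => (A i, x i)) = (Finset.univ.val.map fun i => (B i, y i)) := by
  classical
  set S : Finset ℝ := Finset.image x Finset.univ ∪ Finset.image y Finset.univ with hS
  set c : ℝ → ℝ := fun s =>
    (∑ i, if x i = s then A i else 0) - (∑ i, if y i = s then B i else 0) with hc
  have hScard : S.card ≤ 2 * n := by
    calc S.card ≤ (Finset.image x Finset.univ).card + (Finset.image y Finset.univ).card :=
          Finset.card_union_le _ _
      _ ≤ n + n := by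
          gcongr <;> simpa using Finset.card_image_le.trans (by simp)
      _ = 2 * n := by ring
  have hmemx : ∀ i, x i ∈ S := fun i => Finset.mem_union_left _ (Finset.mem_image_of_mem x (Finset.mem_univ i))
  have hmemy : ∀ j, y j ∈ S := fun j => Finset.mem_union_right _ (Finset.mem_image_of_mem y (Finset.mem_univ j))
  have hsum : ∀ (w : Fin n → ℝ) (z : Fin n → ℝ), (∀ i, z i ∈ S) →
      ∀ k : ℕ, ∑ s ∈ S, (∑ i, if z i = s then w i else 0) * s ^ k = ∑ i, w i * z i ^ k := by
    intro w z hz k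
    calc ∑ s ∈ S, (∑ i, if z i = s then w i else 0) * s ^ k
        = ∑ s ∈ S, ∑ i, (if z i = s then w i * z i ^ k else 0) := by
          refine Finset.sum_congr rfl fun s _ => ?_
          rw [Finset.sum_mul]
          refine Finset.sum_congr rfl fun i _ => ?_
          split
          · next heq => rw [heq]
          · rw [zero_mul]
      _ = ∑ i, ∑ s ∈ S, (if z i = s then w i * z i ^ k else 0) := Finset.sum_comm
      _ = ∑ i, w i * z i ^ k := by
          refine Finset.sum_congr rfl fun i _ => ?_
          rw [Finset.sum_ite_eq S (z i) (fun _ => w i * z i ^ k), if_pos (hz i)]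
  have hzero : ∀ t ∈ S, c t = 0 := by
    refine vanish_aux S c fun k hk => ?_
    have hk' : k < 2 * n := lt_of_lt_of_le hk hScard
    simp only [hc, sub_mul, Finset.sum_sub_distrib]
    rw [hsum A x hmemx k, hsum B y hmemy k, h k hk', sub_self]
  -- For each i, find j with y j = x i and B j = A i
  have hmatch : ∀ i, ∃ j, y j = x i ∧ B j = A i := by
    intro i
    have h0 := hzero (x i) (hmemx i)
    simp only [hc] at h0
    have hx' : (∑ j, if x j = x i then A j else 0) = A i := by
      simp only [hxd.eq_iff]
      rw [Finset.sum_ite_eq' Finset.univ i A]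
      simp
    rw [hx', sub_eq_zero] at h0
    by_cases hex : ∃ j, y j = x i
    · obtain ⟨j, hj⟩ := hex
      refine ⟨j, hj, ?_⟩
      have : ∀ j', (y j' = x i) ↔ (j' = j) := by
        intro j'
        constructor
        · intro hj'; exact hyd (hj'.trans hj.symm)
        · rintro rfl; exact hj
      simp only [this] at h0
      rw [Finset.sum_ite_eq' Finset.univ j B] at h0
      simpa using h0.symm
    · push_neg at hex
      exfalso
      apply hA i
      rw [h0]
      exact Finset.sum_eq_zero fun j _ => if_neg (hex j)
  choose f hf1 hf2 using hmatch
  have hfinj : Function.Injective f := by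
    intro i i' he
    apply hxd
    rw [← hf1 i, ← hf1 i', he]
  have hfbij : Function.Bijective f := Finite.injective_iff_bijective.mp hfinj
  let e : Fin n ≃ Fin n := Equiv.ofBijective f hfbij
  calc (Finset.univ.val.map fun i => (A i, x i))
      = Finset.univ.val.map fun i => (B (e i), y (e i)) := by
        refine Multiset.map_congr rfl fun i _ => ?_
        have : e i = f i := rfl
        rw [this, hf1 i, hf2 i]
  _ = Finset.univ.val.map fun i => (B i, y i) := by
        have : (Finset.univ.val.map fun i => e i) = Finset.univ.val := by
          have := congrArg Finset.val (Finset.map_univ_equiv e)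
          simpa [Finset.map] using this
        conv_rhs => rw [← this]
        rw [Multiset.map_map]
        rfl
end

section
/- If g : [0,1] → ℝ is integrable, not almost-everywhere zero, and has at most s sign changes (i.e., there exist points t_1 < ... < t_l with l ≤ s such that g has constant sign on each complementary interval, with signs alternating or arbitrary), then at least one of the moments m_j(g) = ∫_0^1 x^j g(x) dx for j = 0,...,s is nonzero. -/
open MeasureTheory

theorem sign_changes_nonvanishing_moment (s l : ℕ) (hl : l ≤ s) (g : ℝ → ℝ)
    (hg : IntegrableOn g (Set.Icc 0 1))
    (hg0 : ¬ g =ᵐ[volume.restrict (Set.Icc (0:ℝ) 1)] 0)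
    (t : ℕ → ℝ) (ht0 : t 0 = 0) (ht1 : t (l + 1) = 1)
    (htm : ∀ i ≤ l, t i < t (i + 1))
    (hsign : ∀ i ≤ l,
      (∀ᵐ x ∂(volume.restrict (Set.Ioo (t i) (t (i + 1)))), 0 ≤ g x) ∨
      (∀ᵐ x ∂(volume.restrict (Set.Ioo (t i) (t (i + 1)))), g x ≤ 0)) :
    ∃ j ≤ s, (∫ x in (0:ℝ)..1, x ^ j * g x) ≠ 0 := by
  classical
  by_contra hcon
  push_neg at hcon
  -- monotonicity of t
  have tmono : ∀ i j : ℕ, i ≤ j → j ≤ l + 1 → t i ≤ t j := by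
    intro i j hij hj
    induction j with
    | zero => interval_cases i; exact le_rfl
    | succ n ih =>
      rcases Nat.eq_or_lt_of_le hij with h | h
      · rw [h]
      · exact le_trans (ih (Nat.lt_succ_iff.mp h) (by omega)) (le_of_lt (htm n (by omega)))
  -- the signs
  set ε : ℕ → ℝ := fun i =>
    if (∀ᵐ x ∂(volume.restrict (Set.Ioo (t i) (t (i + 1)))), 0 ≤ g x) then 1 else -1 with hεdef
  have hε1 : ∀ i, ε i = 1 ∨ ε i = -1 := by
    intro i
    by_cases h : (∀ᵐ x ∂(volume.restrict (Set.Ioo (t i) (t (i + 1)))), 0 ≤ g x)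
    · left; simp only [hεdef]; rw [if_pos h]
    · right; simp only [hεdef]; rw [if_neg h]
  have hεsq : ∀ i, ε i * ε i = 1 := by
    intro i; rcases hε1 i with h | h <;> rw [h] <;> norm_num
  have hεg : ∀ i ≤ l, ∀ᵐ x ∂(volume.restrict (Set.Ioo (t i) (t (i + 1)))), 0 ≤ ε i * g x := by
    intro i hi
    by_cases h : (∀ᵐ x ∂(volume.restrict (Set.Ioo (t i) (t (i + 1)))), 0 ≤ g x)
    · simp only [hεdef, if_pos h]
      filter_upwards [h] with x hx; linarith
    · have h2 := (hsign i hi).resolve_left h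
      simp only [hεdef, if_neg h]
      filter_upwards [h2] with x hx; linarith
  -- the polynomial
  set S : Finset ℕ := (Finset.Icc 1 l).filter (fun k => ε k ≠ ε (k - 1)) with hSdef
  have hSmem : ∀ k ∈ S, 1 ≤ k ∧ k ≤ l := by
    intro k hk
    simp only [hSdef, Finset.mem_filter, Finset.mem_Icc] at hk
    exact hk.1
  set p : Polynomial ℝ :=
    Polynomial.C (ε l) * ∏ k ∈ S, (Polynomial.X - Polynomial.C (t k)) with hpdef
  have hpdeg : p.natDegree ≤ s := by
    calc p.natDegree ≤ (Polynomial.C (ε l)).natDegree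
          + (∏ k ∈ S, (Polynomial.X - Polynomial.C (t k))).natDegree :=
        Polynomial.natDegree_mul_le
      _ ≤ 0 + ∑ k ∈ S, (Polynomial.X - Polynomial.C (t k)).natDegree := by
        gcongr
        · exact le_of_eq (Polynomial.natDegree_C _)
        · exact Polynomial.natDegree_prod_le _ _
      _ = ∑ k ∈ S, 1 := by
        rw [zero_add]; exact Finset.sum_congr rfl fun k _ => Polynomial.natDegree_X_sub_C _
      _ = S.card := by simp
      _ ≤ (Finset.Icc 1 l).card := Finset.card_filter_le _ _
      _ = l := by simp
      _ ≤ s := hl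
  -- parity lemma
  have hpar : ∀ d i, i + d = l →
      ε l * (-1 : ℝ) ^ ((S.filter (fun k => i < k)).card) = ε i := by
    intro d
    induction d with
    | zero =>
      intro i hi
      have hi' : i = l := by omega
      subst hi'
      have hempty : S.filter (fun k => i < k) = ∅ := by
        apply Finset.filter_false_of_mem
        intro k hk
        have := hSmem k hk
        omega
      rw [hempty]
      simp
    | succ d ih =>
      intro i hi
      have key : (S.filter (fun k => i < k)).card
          = (S.filter (fun k => i + 1 < k)).card + (if i + 1 ∈ S then 1 else 0) := by
        have hsplit : S.filter (fun k => i < k)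
            = S.filter (fun k => i + 1 < k) ∪ S.filter (fun k => k = i + 1) := by
          rw [← Finset.filter_or]
          apply Finset.filter_congr
          intro k _
          constructor
          · intro h; omega
          · intro h; omega
        rw [hsplit, Finset.card_union_of_disjoint, Finset.filter_eq']
        · split <;> simp
        · rw [Finset.disjoint_left]
          intro a ha ha'
          simp only [Finset.mem_filter] at ha ha'
          omega
      rw [key, pow_add, ← mul_assoc, ih (i + 1) (by omega)]
      by_cases hne : ε (i + 1) ≠ ε i
      · have hmem : i + 1 ∈ S := by
          simp only [hSdef, Finset.mem_filter, Finset.mem_Icc]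
          refine ⟨⟨by omega, by omega⟩, ?_⟩
          simpa using hne
        rw [if_pos hmem, pow_one]
        rcases hε1 (i + 1) with h | h <;> rcases hε1 i with h' | h'
        · exact absurd (h.trans h'.symm) hne
        · rw [h, h']; norm_num
        · rw [h, h']; norm_num
        · exact absurd (h.trans h'.symm) hne
      · push_neg at hne
        have hmem : i + 1 ∉ S := by
          simp only [hSdef, Finset.mem_filter, Finset.mem_Icc, not_and]
          intro _
          simpa using hne
        rw [if_neg hmem, pow_zero, mul_one, hne]
  -- sign of p on each interval
  have hsignp : ∀ i ≤ l, ∀ x ∈ Set.Ioo (t i) (t (i + 1)), 0 < ε i * p.eval x := by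
    intro i hi x hx
    have heval : p.eval x = ε l * ∏ k ∈ S, (x - t k) := by
      simp [hpdef, Polynomial.eval_prod]
    have hpos : 0 < ∏ k ∈ S, ((if i < k then (-1 : ℝ) else 1) * (x - t k)) := by
      apply Finset.prod_pos
      intro k hk
      obtain ⟨hk1, hk2⟩ := hSmem k hk
      by_cases h : i < k
      · rw [if_pos h]
        have h2 : x < t k := lt_of_lt_of_le hx.2 (tmono (i + 1) k (by omega) (by omega))
        nlinarith
      · rw [if_neg h, one_mul]
        have h2 : t k ≤ t i := tmono k i (by omega) (by omega)
        have := hx.1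
        linarith
    rw [Finset.prod_mul_distrib] at hpos
    have hprodsign : (∏ k ∈ S, (if i < k then (-1 : ℝ) else 1))
        = (-1 : ℝ) ^ ((S.filter (fun k => i < k)).card) := by
      rw [Finset.prod_ite, Finset.prod_const, Finset.prod_const, one_pow, mul_one]
    rw [hprodsign] at hpos
    have hεεl : ε i * ε l = (-1 : ℝ) ^ ((S.filter (fun k => i < k)).card) := by
      have h := hpar (l - i) i (by omega)
      calc ε i * ε l = (ε l * (-1 : ℝ) ^ ((S.filter (fun k => i < k)).card)) * ε l := by
            rw [h]
        _ = (-1 : ℝ) ^ ((S.filter (fun k => i < k)).card) * (ε l * ε l) := by ring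
        _ = (-1 : ℝ) ^ ((S.filter (fun k => i < k)).card) := by rw [hεsq]; ring
    calc (0:ℝ) < (-1 : ℝ) ^ ((S.filter (fun k => i < k)).card) * ∏ k ∈ S, (x - t k) := hpos
      _ = ε i * p.eval x := by rw [heval, ← hεεl]; ring
  -- interval integrability
  have hgint : IntervalIntegrable g volume 0 1 := by
    rw [intervalIntegrable_iff_integrableOn_Ioc_of_le (by norm_num)]
    exact hg.mono_set Set.Ioc_subset_Icc_self
  -- the integral of p * g vanishes
  have hint0 : (∫ x in (0:ℝ)..1, p.eval x * g x) = 0 := by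
    have hdeg : p.natDegree < s + 1 := by omega
    have hrw : ∀ x : ℝ, p.eval x * g x
        = ∑ j ∈ Finset.range (s + 1), p.coeff j * (x ^ j * g x) := by
      intro x
      rw [Polynomial.eval_eq_sum_range' hdeg, Finset.sum_mul]
      exact Finset.sum_congr rfl fun j _ => by ring
    simp_rw [hrw]
    rw [intervalIntegral.integral_finset_sum]
    · apply Finset.sum_eq_zero
      intro j hj
      rw [intervalIntegral.integral_const_mul, hcon j (by simp at hj; omega), mul_zero]
    · intro j _
      exact (hgint.continuousOn_mul ((continuous_pow j).continuousOn)).const_mul _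
  have hPint : IntegrableOn (fun x => p.eval x * g x) (Set.Ioc (0:ℝ) 1) := by
    have h := hgint.continuousOn_mul (p.continuous_aeval.continuousOn (s := Set.uIcc 0 1))
    rw [intervalIntegrable_iff_integrableOn_Ioc_of_le (by norm_num)] at h
    simpa [Polynomial.aeval_def] using h
  -- a.e. nonnegativity of p * g on (0, 1]
  have hcover : Set.Ioc (0:ℝ) 1 ⊆ ⋃ i : Fin (l + 1), Set.Ioc (t i) (t (i + 1)) := by
    have haux : ∀ n, n ≤ l + 1 →
        Set.Ioc (t 0) (t n) ⊆ ⋃ i : Fin (l + 1), Set.Ioc (t i) (t (i + 1)) := by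
      intro n
      induction n with
      | zero => intro _; simp
      | succ m ih =>
        intro hm
        have h1 : t 0 ≤ t m := tmono 0 m (by omega) (by omega)
        have h2 : t m ≤ t (m + 1) := tmono m (m + 1) (by omega) (by omega)
        rw [← Set.Ioc_union_Ioc_eq_Ioc h1 h2]
        apply Set.union_subset (ih (by omega))
        exact Set.subset_iUnion (fun i : Fin (l + 1) => Set.Ioc (t i) (t (i + 1)))
          ⟨m, by omega⟩
    rw [← ht0, ← ht1]
    exact haux (l + 1) le_rfl
  have hPnn : ∀ᵐ x ∂(volume.restrict (Set.Ioc (0:ℝ) 1)), 0 ≤ p.eval x * g x := by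
    have key : ∀ i : Fin (l + 1),
        ∀ᵐ x ∂(volume.restrict (Set.Ioc (t (i : ℕ)) (t ((i : ℕ) + 1)))),
          0 ≤ p.eval x * g x := by
      intro i
      have hi : (i : ℕ) ≤ l := by omega
      rw [← Measure.restrict_congr_set Ioo_ae_eq_Ioc]
      filter_upwards [hεg (i : ℕ) hi, ae_restrict_mem measurableSet_Ioo] with x hx hmem
      have h1 := hsignp (i : ℕ) hi x hmem
      have h2 : (ε (i : ℕ) * p.eval x) * (ε (i : ℕ) * g x)
          = (ε (i : ℕ) * ε (i : ℕ)) * (p.eval x * g x) := by ring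
      rw [hεsq, one_mul] at h2
      have h3 := mul_nonneg h1.le hx
      linarith
    have hUnion := (ae_restrict_iUnion_iff
      (fun i : Fin (l + 1) => Set.Ioc (t (i : ℕ)) (t ((i : ℕ) + 1)))
      (fun x => 0 ≤ p.eval x * g x)).mpr key
    exact hUnion.filter_mono (ae_mono (Measure.restrict_mono hcover le_rfl))
  -- p * g = 0 a.e.
  have hint0' : ∫ x in Set.Ioc (0:ℝ) 1, p.eval x * g x = 0 := by
    rw [← intervalIntegral.integral_of_le (by norm_num : (0:ℝ) ≤ 1)]
    exact hint0
  have hP0 : (fun x => p.eval x * g x) =ᵐ[volume.restrict (Set.Ioc (0:ℝ) 1)] 0 := by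
    refine (integral_eq_zero_iff_of_nonneg_ae ?_ hPint).mp hint0'
    filter_upwards [hPnn] with x hx
    exact hx
  -- p is not the zero polynomial
  have hpne : p ≠ 0 := by
    apply mul_ne_zero
    · rw [Ne, Polynomial.C_eq_zero]
      rcases hε1 l with h | h <;> rw [h] <;> norm_num
    · exact (Polynomial.monic_prod_of_monic _ _
        fun k _ => Polynomial.monic_X_sub_C _).ne_zero
  have hroot : ∀ᵐ x ∂(volume.restrict (Set.Ioc (0:ℝ) 1)), p.eval x ≠ 0 := by
    apply ae_restrict_of_ae
    have hfin : {x : ℝ | p.IsRoot x}.Finite := Polynomial.finite_setOf_isRoot hpne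
    have h0 : volume {x : ℝ | p.eval x = 0} = 0 := hfin.measure_zero _
    rw [ae_iff]
    simpa using h0
  have hg0' : g =ᵐ[volume.restrict (Set.Ioc (0:ℝ) 1)] 0 := by
    filter_upwards [hP0, hroot] with x h1 h2
    simp only [Pi.zero_apply] at h1 ⊢
    exact (mul_eq_zero.mp h1).resolve_left h2
  rw [← Measure.restrict_congr_set Ioc_ae_eq_Icc] at hg0
  exact hg0 hg0'
end

section
/- If g : [0,1] → ℝ is integrable, not a.e. zero, and ∫_0^1 x^j g(x) dx = 0 for j = 0,...,s, then g has more than s sign changes: for any points 0 < t_1 < ... < t_l < 1 with l ≤ s, g does not keep a.e. constant (weakly alternating) sign on the intervals determined by the t_i. -/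
open MeasureTheory

theorem vanishing_moments_many_sign_changes (s : ℕ) (g : ℝ → ℝ)
    (hg : IntegrableOn g (Set.Icc 0 1))
    (hg0 : ¬ g =ᵐ[volume.restrict (Set.Icc (0:ℝ) 1)] 0)
    (hmom : ∀ j ≤ s, (∫ x in (0:ℝ)..1, x ^ j * g x) = 0) :
    ∀ l ≤ s, ∀ t : ℕ → ℝ, t 0 = 0 → t (l + 1) = 1 → (∀ i ≤ l, t i < t (i + 1)) →
      (∀ i, 1 ≤ i → i ≤ l → 0 < t i ∧ t i < 1) →
      ¬ ∃ ε : ℝ, (ε = 1 ∨ ε = -1) ∧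
        ∀ i ≤ l, ∀ᵐ x ∂(volume.restrict (Set.Ioo (t i) (t (i + 1)))),
          0 ≤ (-1 : ℝ) ^ i * ε * g x := by
  intro l hl t ht0 ht1 hlt _hint
  rintro ⟨ε, hε, hsign⟩
  classical
  -- monotonicity of t on 0..l+1
  have hmono : ∀ a b : ℕ, a ≤ b → b ≤ l + 1 → t a ≤ t b := by
    intro a b hab hb
    induction b, hab using Nat.le_induction with
    | base => exact le_rfl
    | succ b hab ih =>
      exact le_trans (ih (by omega)) (le_of_lt (hlt b (by omega)))
  -- the polynomial with roots t 1, ..., t l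
  set P : Polynomial ℝ := ∏ j ∈ Finset.range l, (Polynomial.X - Polynomial.C (t (j+1))) with hP
  have hPdeg : P.natDegree ≤ l := by
    refine le_trans (Polynomial.natDegree_prod_le _ _) ?_
    simp [Polynomial.natDegree_X_sub_C]
  have hPeval : ∀ x : ℝ, P.eval x = ∏ j ∈ Finset.range l, (x - t (j+1)) := by
    intro x; simp [hP, Polynomial.eval_prod]
  -- switch to the measure restricted to Ioo 0 1
  have hIccIoo : volume.restrict (Set.Icc (0:ℝ) 1) = volume.restrict (Set.Ioo 0 1) :=
    (Measure.restrict_congr_set Ioo_ae_eq_Icc).symm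
  have hIocIoo : volume.restrict (Set.Ioo (0:ℝ) 1) = volume.restrict (Set.Ioc 0 1) :=
    Measure.restrict_congr_set Ioo_ae_eq_Ioc
  have hgI : Integrable g (volume.restrict (Set.Ioo (0:ℝ) 1)) := by
    have h := hg
    rwa [IntegrableOn, hIccIoo] at h
  -- integrability of monomials times g
  have hmul : ∀ j : ℕ, Integrable (fun x => x ^ j * g x) (volume.restrict (Set.Ioo (0:ℝ) 1)) := by
    intro j
    refine hgI.bdd_mul (c := 1) ((continuous_pow j).aestronglyMeasurable) ?_
    filter_upwards [ae_restrict_mem measurableSet_Ioo] with x hx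
    have h0 : (0:ℝ) ≤ x := le_of_lt hx.1
    have h1 : x ≤ 1 := le_of_lt hx.2
    rw [Real.norm_eq_abs, abs_pow, abs_of_nonneg h0]
    exact pow_le_one₀ h0 h1
  -- moments over Ioo 0 1 vanish
  have hmomμ : ∀ j ≤ s, ∫ x in Set.Ioo (0:ℝ) 1, x ^ j * g x = 0 := by
    intro j hj
    have h := hmom j hj
    rw [intervalIntegral.integral_of_le (by norm_num : (0:ℝ) ≤ 1)] at h
    rw [hIocIoo]
    exact h
  -- ∫ P(x) g(x) = 0
  have hPg : ∫ x in Set.Ioo (0:ℝ) 1, P.eval x * g x = 0 := by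
    have hexp : ∀ x : ℝ, P.eval x * g x
        = ∑ j ∈ Finset.range (P.natDegree + 1), P.coeff j * (x ^ j * g x) := by
      intro x
      rw [Polynomial.eval_eq_sum_range, Finset.sum_mul]
      exact Finset.sum_congr rfl fun j _ => by ring
    simp_rw [hexp]
    rw [integral_finset_sum _ (fun j _ => (hmul j).const_mul _)]
    refine Finset.sum_eq_zero fun j hj => ?_
    have hjs : j ≤ s := by
      have := Finset.mem_range.1 hj; omega
    rw [integral_const_mul, hmomμ j hjs, mul_zero]
  -- a.e. versions of the hypotheses on the whole real line
  have hae_sign : ∀ᵐ x ∂(volume : Measure ℝ),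
      ∀ i, i ≤ l → x ∈ Set.Ioo (t i) (t (i+1)) → 0 ≤ (-1:ℝ)^i * ε * g x := by
    rw [ae_all_iff]
    intro i
    by_cases hi : i ≤ l
    · have h := (ae_restrict_iff' measurableSet_Ioo).1 (hsign i hi)
      filter_upwards [h] with x hx _ hxm
      exact hx hxm
    · filter_upwards with x hi'
      exact absurd hi' hi
  have hae_root : ∀ᵐ x ∂(volume : Measure ℝ), ∀ i, 1 ≤ i → i ≤ l → x ≠ t i := by
    rw [ae_all_iff]
    intro i
    have h : (volume : Measure ℝ) {t i} = 0 := measure_singleton _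
    have h2 : ∀ᵐ x ∂(volume : Measure ℝ), x ∉ ({t i} : Set ℝ) :=
      measure_eq_zero_iff_ae_notMem.1 h
    filter_upwards [h2] with x hx _ _
    simpa using hx
  -- nonnegativity of (-1)^l ε P g a.e. on Ioo 0 1
  have hnonneg : 0 ≤ᵐ[volume.restrict (Set.Ioo (0:ℝ) 1)]
      fun x => (-1:ℝ)^l * ε * (P.eval x * g x) := by
    filter_upwards [ae_restrict_of_ae (s := Set.Ioo (0:ℝ) 1) hae_sign,
      ae_restrict_of_ae (s := Set.Ioo (0:ℝ) 1) hae_root,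
      ae_restrict_mem measurableSet_Ioo] with x hx1 hx2 hxm
    set i := Nat.findGreatest (fun i => t i < x) l with hidef
    have hil : i ≤ l := Nat.findGreatest_le l
    have hP0 : t 0 < x := by rw [ht0]; exact hxm.1
    have htix : t i < x := Nat.findGreatest_spec (P := fun i => t i < x) (Nat.zero_le l) hP0
    have hxti : x < t (i+1) := by
      rcases eq_or_lt_of_le hil with h | h
      · rw [h, ht1]; exact hxm.2
      · have hng : ¬ t (i+1) < x :=
          Nat.findGreatest_is_greatest (P := fun i => t i < x) (n := l) (by omega) (by omega)
        have hle : x ≤ t (i+1) := le_of_not_gt hng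
        have hne : x ≠ t (i+1) := hx2 (i+1) (by omega) (by omega)
        exact lt_of_le_of_ne hle hne
    have hgs : 0 ≤ (-1:ℝ)^i * ε * g x := hx1 i hil ⟨htix, hxti⟩
    have hpos1 : (0:ℝ) < ∏ j ∈ Finset.range i, (x - t (j+1)) := by
      refine Finset.prod_pos fun j hj => ?_
      have hji : j + 1 ≤ i := Finset.mem_range.1 hj
      have := hmono (j+1) i hji (by omega)
      linarith
    have hpos2 : (0:ℝ) < ∏ j ∈ Finset.Ico i l, (t (j+1) - x) := by
      refine Finset.prod_pos fun j hj => ?_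
      obtain ⟨h1j, h2j⟩ := Finset.mem_Ico.1 hj
      have := hmono (i+1) (j+1) (by omega) (by omega)
      linarith
    have key : (-1:ℝ)^(l-i) * P.eval x
        = (∏ j ∈ Finset.range i, (x - t (j+1))) * ∏ j ∈ Finset.Ico i l, (t (j+1) - x) := by
      calc (-1:ℝ)^(l-i) * P.eval x
          = (∏ j ∈ Finset.range i, (x - t (j+1)))
            * ((∏ _j ∈ Finset.Ico i l, (-1:ℝ)) * ∏ j ∈ Finset.Ico i l, (x - t (j+1))) := by
            rw [hPeval, ← Finset.prod_range_mul_prod_Ico _ hil, Finset.prod_const,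
              Nat.card_Ico]
            ring
        _ = _ := by
            rw [← Finset.prod_mul_distrib]
            congr 1
            exact Finset.prod_congr rfl fun j _ => by ring
    have hPel : 0 ≤ (-1:ℝ)^(l-i) * P.eval x := by
      rw [key]; exact le_of_lt (mul_pos hpos1 hpos2)
    have hpow : (-1:ℝ)^l = (-1:ℝ)^(l-i) * (-1:ℝ)^i := by
      rw [← pow_add, Nat.sub_add_cancel hil]
    have heq : (-1:ℝ)^l * ε * (P.eval x * g x)
        = ((-1:ℝ)^(l-i) * P.eval x) * ((-1:ℝ)^i * ε * g x) := by
      rw [hpow]; ring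
    show 0 ≤ (-1:ℝ)^l * ε * (P.eval x * g x)
    rw [heq]
    exact mul_nonneg hPel hgs
  -- integrability of (-1)^l ε P g
  have hPgInt : Integrable (fun x => P.eval x * g x) (volume.restrict (Set.Ioo (0:ℝ) 1)) := by
    obtain ⟨C, hC⟩ := (isCompact_Icc (a := (0:ℝ)) (b := 1)).exists_bound_of_continuousOn
      (P.continuous_aeval).continuousOn
    refine hgI.bdd_mul (c := C) (P.continuous_aeval).aestronglyMeasurable ?_
    filter_upwards [ae_restrict_mem measurableSet_Ioo] with x hx
    exact hC x (Set.Ioo_subset_Icc_self hx)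
  have hint_h : Integrable (fun x => (-1:ℝ)^l * ε * (P.eval x * g x))
      (volume.restrict (Set.Ioo (0:ℝ) 1)) := hPgInt.const_mul _
  have hzero : ∫ x in Set.Ioo (0:ℝ) 1, (-1:ℝ)^l * ε * (P.eval x * g x) = 0 := by
    rw [integral_const_mul, hPg, mul_zero]
  have haezero : (fun x => (-1:ℝ)^l * ε * (P.eval x * g x))
      =ᵐ[volume.restrict (Set.Ioo (0:ℝ) 1)] 0 :=
    (integral_eq_zero_iff_of_nonneg_ae hnonneg hint_h).1 hzero
  -- conclude g = 0 a.e., contradiction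
  have hε' : ε ≠ 0 := by rcases hε with h | h <;> simp [h]
  have hgz : g =ᵐ[volume.restrict (Set.Ioo (0:ℝ) 1)] 0 := by
    filter_upwards [haezero, ae_restrict_of_ae (s := Set.Ioo (0:ℝ) 1) hae_root]
      with x hx hroot
    have hPne : P.eval x ≠ 0 := by
      rw [hPeval]
      refine Finset.prod_ne_zero_iff.2 fun j hj => ?_
      have hjl : j + 1 ≤ l := Finset.mem_range.1 hj
      exact sub_ne_zero.2 (hroot (j+1) (by omega) hjl)
    have hne : (-1:ℝ)^l * ε ≠ 0 := mul_ne_zero (pow_ne_zero _ (by norm_num)) hε'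
    have hx' : (-1:ℝ)^l * ε * (P.eval x * g x) = 0 := hx
    have hPgx : P.eval x * g x = 0 := by
      rcases mul_eq_zero.1 hx' with h | h
      · exact absurd h hne
      · exact h
    rcases mul_eq_zero.1 hPgx with h | h
    · exact absurd h hPne
    · simpa using h
  exact hg0 (by rwa [hIccIoo])
end

section
/- If P, W_1, W_2 are polynomials such that P = U_1 ∘ W_1 = U_2 ∘ W_2 for some polynomials U_1, U_2, and W_1(0) = W_1(1), W_2(0) = W_2(1), then for Q = W_1 + W_2 all moments ∫_0^1 P(t)^k Q(t) P'(t) dt vanish for every k ≥ 0. -/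
open Polynomial intervalIntegral

noncomputable def antider (p : Polynomial ℝ) : Polynomial ℝ :=
  p.sum fun n a => C (a / (n + 1)) * X ^ (n + 1)

lemma antider_derivative (p : Polynomial ℝ) : (antider p).derivative = p := by
  unfold antider
  rw [Polynomial.sum, derivative_sum]
  conv_rhs => rw [p.as_sum_support_C_mul_X_pow]
  apply Finset.sum_congr rfl
  intro n hn
  rw [derivative_C_mul, derivative_X_pow]
  push_cast
  rw [← mul_assoc, ← C_mul]
  congr 2
  have : (n:ℝ)+1 ≠ 0 := by positivity
  field_simp

lemma poly_integral_deriv (R : Polynomial ℝ) :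
    ∫ t in (0:ℝ)..1, R.derivative.eval t = R.eval 1 - R.eval 0 := by
  have : ∫ t in (0:ℝ)..1, R.derivative.eval t
      = ∫ t in (0:ℝ)..1, deriv (fun x => R.eval x) t := by
    simp [Polynomial.deriv]
  rw [this]
  apply integral_deriv_eq_sub (fun x _ => R.differentiableAt)
  have h : (deriv fun x => R.eval x) = fun t => R.derivative.eval t :=
    funext fun t => R.deriv
  rw [h]
  exact (R.derivative.continuous_aeval).intervalIntegrable 0 1

lemma one_factor (P W U : Polynomial ℝ) (h : P = U.comp W)
    (hW : W.eval 0 = W.eval 1) (k : ℕ) :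
    ∫ t in (0:ℝ)..1, P.eval t ^ k * W.eval t * P.derivative.eval t = 0 := by
  set H : Polynomial ℝ := U ^ k * X * derivative U with hH
  set G : Polynomial ℝ := (antider H).comp W with hG
  have hGd : G.derivative = (H.comp W) * W.derivative := by
    rw [hG, derivative_comp, antider_derivative, mul_comm]
  have hint : ∀ t : ℝ, P.eval t ^ k * W.eval t * P.derivative.eval t
      = G.derivative.eval t := by
    intro t
    rw [hGd, h]
    simp only [hH, eval_comp, derivative_comp, eval_mul, eval_pow, eval_X]
    ring
  calc ∫ t in (0:ℝ)..1, P.eval t ^ k * W.eval t * P.derivative.eval t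
      = ∫ t in (0:ℝ)..1, G.derivative.eval t := by
        simp only [hint]
    _ = G.eval 1 - G.eval 0 := poly_integral_deriv G
    _ = 0 := by rw [hG]; simp [eval_comp, hW]

theorem two_factors_moments_vanish (P W₁ W₂ U₁ U₂ : Polynomial ℝ)
    (h1 : P = U₁.comp W₁) (h2 : P = U₂.comp W₂)
    (hW1 : W₁.eval 0 = W₁.eval 1) (hW2 : W₂.eval 0 = W₂.eval 1) (k : ℕ) :
    ∫ t in (0:ℝ)..1, P.eval t ^ k * (W₁ + W₂).eval t * P.derivative.eval t = 0 := by
  have e1 := one_factor P W₁ U₁ h1 hW1 k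
  have e2 := one_factor P W₂ U₂ h2 hW2 k
  have : ∀ t : ℝ, P.eval t ^ k * (W₁ + W₂).eval t * P.derivative.eval t
      = P.eval t ^ k * W₁.eval t * P.derivative.eval t
      + P.eval t ^ k * W₂.eval t * P.derivative.eval t := by
    intro t; simp [eval_add]; ring
  simp only [this]
  rw [integral_add, e1, e2, add_zero]
  · exact ((P.continuous_aeval.pow k).mul W₁.continuous_aeval |>.mul
      P.derivative.continuous_aeval).intervalIntegrable 0 1
  · exact ((P.continuous_aeval.pow k).mul W₂.continuous_aeval |>.mul
      P.derivative.continuous_aeval).intervalIntegrable 0 1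
end
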